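/- Let a : ℂ → [0,∞) be continuous with a(z) → 0 as |z| → ∞, suppose μ := a·σ is a probability measure on ℂ with ∫_ℂ |log|ζ|| dμ(ζ) < ∞, and suppose μ(ℂ \ Q_R) > 0 for every R > 0. Then for every η > 0 there exist an integer M ≥ 2 with 1/M < η and a real number R ≥ 6 such that ∫_{ℂ\Q_R} |log|ζ|| dμ(ζ) < η, μ(ℂ \ Q_R) = 1/M, and a(z) ≤ η for all z with |z| > R/3. -/

import Mathlib

open MeasureTheory Filter Topology

noncomputable section

/-- The open square `Q_R = {x + iy : |x| < R, |y| < R}`. -/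
def QR (R : ℝ) : Set ℂ := {z : ℂ | |z.re| < R ∧ |z.im| < R}


lemma QR_meas (R : ℝ) : MeasurableSet (QR R) :=
  (measurableSet_lt (measurable_abs.comp Complex.measurable_re) measurable_const).inter
    (measurableSet_lt (measurable_abs.comp Complex.measurable_im) measurable_const)

lemma QR_mono {R R' : ℝ} (h : R ≤ R') : QR R ⊆ QR R' :=
  fun z hz => ⟨hz.1.trans_le h, hz.2.trans_le h⟩

lemma volume_QR (R : ℝ) : volume (QR R) = ENNReal.ofReal (2*R) * ENNReal.ofReal (2*R) := by
  have : QR R = Complex.measurableEquivRealProd ⁻¹' (Set.Ioo (-R) R ×ˢ Set.Ioo (-R) R) := by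
    ext z
    simp [QR, Complex.measurableEquivRealProd, Complex.equivRealProdLm,
      Complex.equivRealProd, abs_lt, Set.mem_prod, and_comm, and_assoc, and_left_comm]
  rw [this, Complex.volume_preserving_equiv_real_prod.measure_preimage
    ((measurableSet_Ioo.prod measurableSet_Ioo)).nullMeasurableSet]
  rw [show (volume : Measure (ℝ × ℝ)) = (volume : Measure ℝ).prod volume from rfl,
    Measure.prod_prod, Real.volume_Ioo]
  ring_nf

lemma iUnion_QR : ⋃ n : ℕ, QR n = Set.univ := by
  ext z
  simp only [Set.mem_iUnion, Set.mem_univ, iff_true]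
  obtain ⟨n, hn⟩ := exists_nat_gt (max |z.re| |z.im|)
  exact ⟨n, (le_max_left _ _).trans_lt hn, (le_max_right _ _).trans_lt hn⟩
theorem statement18 (a : ℂ → ℝ) (hac : Continuous a) (ha0 : ∀ z, 0 ≤ a z)
    (hvanish : Tendsto a (Filter.comap (fun z : ℂ => ‖z‖) Filter.atTop) (𝓝 0))
    (μ : Measure ℂ)
    (hμ : μ = (volume : Measure ℂ).withDensity (fun z => ENNReal.ofReal (a z)))
    (hprob : IsProbabilityMeasure μ)
    (hlog : Integrable (fun ζ => Real.log ‖ζ‖) μ)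
    (htail : ∀ R : ℝ, 0 < R → 0 < μ (QR R)ᶜ)
    (η : ℝ) (hη : 0 < η) :
    ∃ (M : ℕ) (R : ℝ), 2 ≤ M ∧ ((M : ℝ))⁻¹ < η ∧ 6 ≤ R ∧
      (∫ ζ in (QR R)ᶜ, |Real.log ‖ζ‖| ∂μ) < η ∧
      μ (QR R)ᶜ = (M : ENNReal)⁻¹ ∧
      (∀ z : ℂ, R / 3 < ‖z‖ → a z ≤ η) := by
  
  have hμfin : ∀ s : Set ℂ, μ s ≠ ⊤ := fun s => measure_ne_top μ s
  -- small values of a at infinity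
  have hsmall : ∀ ε : ℝ, 0 < ε → ∃ B : ℝ, ∀ z : ℂ, B ≤ ‖z‖ → a z < ε := by
    intro ε hε
    have h := hvanish.eventually_lt_const hε
    rw [Filter.eventually_comap, Filter.eventually_atTop] at h
    obtain ⟨B, hB⟩ := h
    exact ⟨B, fun z hz => hB _ hz z rfl⟩
  -- a is bounded
  obtain ⟨C, hC0, hCb⟩ : ∃ C : ℝ, 0 < C ∧ ∀ z, a z ≤ C := by
    obtain ⟨B, hB⟩ := hsmall 1 one_pos
    obtain ⟨C₀, hC₀⟩ := (isCompact_closedBall (0:ℂ) B).exists_bound_of_continuousOn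
      hac.continuousOn
    refine ⟨max C₀ 1, lt_of_lt_of_le one_pos (le_max_right _ _), fun z => ?_⟩
    rcases le_or_gt B (‖z‖) with h | h
    · exact le_trans (hB z h).le (le_max_right _ _)
    · have hz : z ∈ Metric.closedBall (0:ℂ) B := by
        simpa [Metric.mem_closedBall, Complex.dist_eq] using h.le
      calc a z ≤ |a z| := le_abs_self _
        _ ≤ C₀ := hC₀ z hz
        _ ≤ max C₀ 1 := le_max_left _ _
  set g : ℝ → ℝ := fun R => (μ (QR R)).toReal with hg
  set t : ℝ → ℝ := fun R => (μ (QR R)ᶜ).toReal with ht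
  -- key Lipschitz-type estimate for g
  have key : ∀ R R' : ℝ, 0 ≤ R → R ≤ R' → g R' - g R ≤ C * (4*R'^2 - 4*R^2) := by
    intro R R' hR hRR'
    have hsub := QR_mono hRR'
    have h1 : g R' - g R = (μ (QR R' \ QR R)).toReal := by
      rw [measure_diff hsub (QR_meas R).nullMeasurableSet (hμfin _),
        ENNReal.toReal_sub_of_le (measure_mono hsub) (hμfin _)]
    have hvolfin : volume (QR R') ≠ ⊤ := by
      rw [volume_QR]; exact ENNReal.mul_ne_top ENNReal.ofReal_ne_top ENNReal.ofReal_ne_top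
    have h2 : μ (QR R' \ QR R) ≤ ENNReal.ofReal C * volume (QR R' \ QR R) := by
      rw [hμ, withDensity_apply _ ((QR_meas R').diff (QR_meas R))]
      calc ∫⁻ z in QR R' \ QR R, ENNReal.ofReal (a z) ∂volume
          ≤ ∫⁻ _ in QR R' \ QR R, ENNReal.ofReal C ∂volume :=
            lintegral_mono fun z => ENNReal.ofReal_le_ofReal (hCb z)
        _ = ENNReal.ofReal C * volume (QR R' \ QR R) := setLIntegral_const _ _
    have hvdfin : volume (QR R' \ QR R) ≠ ⊤ :=
      ne_top_of_le_ne_top hvolfin (measure_mono Set.diff_subset)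
    have hvol : (volume (QR R' \ QR R)).toReal = 4*R'^2 - 4*R^2 := by
      have hvfin : volume (QR R) ≠ ⊤ := by
        rw [volume_QR]; exact ENNReal.mul_ne_top ENNReal.ofReal_ne_top ENNReal.ofReal_ne_top
      rw [measure_diff hsub (QR_meas R).nullMeasurableSet hvfin,
        ENNReal.toReal_sub_of_le (measure_mono hsub) hvolfin, volume_QR, volume_QR,
        ENNReal.toReal_mul, ENNReal.toReal_mul, ENNReal.toReal_ofReal (by linarith),
        ENNReal.toReal_ofReal (by linarith)]
      ring
    calc g R' - g R = (μ (QR R' \ QR R)).toReal := h1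
      _ ≤ (ENNReal.ofReal C * volume (QR R' \ QR R)).toReal :=
          ENNReal.toReal_mono (ENNReal.mul_ne_top ENNReal.ofReal_ne_top hvdfin) h2
      _ = C * (volume (QR R' \ QR R)).toReal := by
          rw [ENNReal.toReal_mul, ENNReal.toReal_ofReal hC0.le]
      _ = C * (4*R'^2 - 4*R^2) := by rw [hvol]
  have hgmono : ∀ {R R' : ℝ}, R ≤ R' → g R ≤ g R' := fun h =>
    ENNReal.toReal_mono (hμfin _) (measure_mono (QR_mono h))
  -- t = 1 - g
  have ht_eq : ∀ R : ℝ, t R = 1 - g R := by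
    intro R
    have h1 : μ (QR R)ᶜ = 1 - μ (QR R) := by
      rw [measure_compl (QR_meas R) (hμfin _), measure_univ]
    show (μ (QR R)ᶜ).toReal = 1 - (μ (QR R)).toReal
    rw [h1, ENNReal.toReal_sub_of_le prob_le_one ENNReal.one_ne_top, ENNReal.toReal_one]
  have htmono : ∀ {R R' : ℝ}, R ≤ R' → t R' ≤ t R := fun h =>
    ENNReal.toReal_mono (hμfin _) (measure_mono (Set.compl_subset_compl.2 (QR_mono h)))
  -- continuity of t on compact intervals [A, B'] with 0 ≤ A
  have htcont : ∀ A B' : ℝ, 0 ≤ A → ContinuousOn t (Set.Icc A B') := by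
    intro A B' hA
    have hgl : LipschitzOnWith (Real.toNNReal (8*C*B')) g (Set.Icc A B') := by
      apply LipschitzOnWith.of_dist_le_mul
      intro x hx y hy
      have hKB : (Real.toNNReal (8*C*B') : ℝ) = 8*C*B' := by
        rw [Real.coe_toNNReal]
        nlinarith [hx.1, hx.2, hC0]
      rw [hKB, Real.dist_eq, Real.dist_eq]
      rcases le_total x y with h | h
      · rw [abs_of_nonpos (by linarith [hgmono h]), abs_of_nonpos (by linarith)]
        have h1 := key x y (hA.trans hx.1) h
        have hprod : 0 ≤ C * ((y - x) * (2*B' - (x+y))) :=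
          mul_nonneg hC0.le (mul_nonneg (by linarith) (by linarith [hx.2, hy.2]))
        nlinarith [h1, hprod]
      · rw [abs_of_nonneg (by linarith [hgmono h]), abs_of_nonneg (by linarith)]
        have h1 := key y x (hA.trans hy.1) h
        have hprod : 0 ≤ C * ((x - y) * (2*B' - (x+y))) :=
          mul_nonneg hC0.le (mul_nonneg (by linarith) (by linarith [hx.2, hy.2]))
        nlinarith [h1, hprod]
    have : ContinuousOn g (Set.Icc A B') := hgl.continuousOn
    have : ContinuousOn (fun R => 1 - g R) (Set.Icc A B') := continuousOn_const.sub this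
    exact this.congr fun R _ => ht_eq R
  -- tail integral of |log| is small beyond some square
  have habs : Integrable (fun ζ => |Real.log ‖ζ‖|) μ := hlog.abs
  obtain ⟨n₀, hn₀⟩ : ∃ n₀ : ℕ,
      (∫ ζ in (QR (n₀:ℝ))ᶜ, |Real.log ‖ζ‖| ∂μ) < η := by
    have hmono : Monotone fun n : ℕ => QR (n:ℝ) := fun m n hmn =>
      QR_mono (Nat.cast_le.2 hmn)
    have hU : ⋃ n : ℕ, QR (n:ℝ) = Set.univ := iUnion_QR
    have h := MeasureTheory.tendsto_setIntegral_of_monotone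
      (fun n : ℕ => QR_meas (n:ℝ)) hmono (by rw [hU]; exact habs.integrableOn)
    rw [hU] at h
    simp only [Measure.restrict_univ] at h
    have h2 := h.eventually_const_lt
      (show (∫ ζ, |Real.log ‖ζ‖| ∂μ) - η < ∫ ζ, |Real.log ‖ζ‖| ∂μ
        by linarith)
    obtain ⟨n₀, hn₀⟩ := h2.exists
    refine ⟨n₀, ?_⟩
    have := integral_add_compl (QR_meas (n₀:ℝ)) habs
    linarith
  -- a ≤ η beyond some radius
  obtain ⟨B, hB⟩ := hsmall η hη
  -- base point R₀
  set R₀ : ℝ := max 6 (max (3*B) (n₀:ℝ)) with hR₀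
  have hR₀6 : (6:ℝ) ≤ R₀ := le_max_left _ _
  have hR₀pos : (0:ℝ) < R₀ := by linarith
  have htR₀pos : 0 < t R₀ := ENNReal.toReal_pos (htail R₀ hR₀pos).ne' (hμfin _)
  -- choose M
  set c : ℝ := min η (t R₀) with hc
  have hcpos : 0 < c := lt_min hη htR₀pos
  obtain ⟨M, hM⟩ := exists_nat_gt (max 2 c⁻¹)
  have hM2 : 2 ≤ M := by exact_mod_cast (le_max_left (2:ℝ) c⁻¹).trans hM.le
  have hMpos : (0:ℝ) < M := by positivity
  have hMinv : ((M:ℝ))⁻¹ < c := by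
    rw [inv_lt_comm₀ hMpos hcpos]
    exact lt_of_le_of_lt (le_max_right _ _) hM
  -- choose R₁ with t R₁ < 1/M
  obtain ⟨n₁, hn₁⟩ : ∃ n₁ : ℕ, t (n₁:ℝ) < ((M:ℝ))⁻¹ := by
    have hanti : Antitone fun n : ℕ => (QR (n:ℝ))ᶜ := fun m n hmn =>
      Set.compl_subset_compl.2 (QR_mono (Nat.cast_le.2 hmn))
    have hI : ⋂ n : ℕ, (QR (n:ℝ))ᶜ = ∅ := by
      rw [← Set.compl_iUnion, iUnion_QR, Set.compl_univ]
    have h := tendsto_measure_iInter_atTop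
      (fun n : ℕ => (QR_meas (n:ℝ)).compl.nullMeasurableSet) hanti ⟨0, hμfin _⟩
    rw [hI, measure_empty] at h
    have h2 : Tendsto (fun n : ℕ => t (n:ℝ)) atTop (𝓝 0) := by
      have := (ENNReal.tendsto_toReal (by simp)).comp h
      exact this
    exact (h2.eventually_lt_const (by positivity)).exists
  set R₁ : ℝ := max R₀ (n₁:ℝ) with hR₁
  have htR₁ : t R₁ < ((M:ℝ))⁻¹ := lt_of_le_of_lt (htmono (le_max_right _ _)) hn₁
  -- IVT
  have hmem : ((M:ℝ))⁻¹ ∈ Set.Icc (t R₁) (t R₀) :=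
    ⟨htR₁.le, (hMinv.trans_le (min_le_right _ _)).le⟩
  obtain ⟨R, hRmem, hRt⟩ := intermediate_value_Icc' (le_max_left R₀ (n₁:ℝ))
    (htcont R₀ R₁ hR₀pos.le) hmem
  have hRR₀ : R₀ ≤ R := hRmem.1
  refine ⟨M, R, hM2, lt_of_lt_of_le hMinv (min_le_left _ _), hR₀6.trans hRR₀, ?_, ?_, ?_⟩
  · -- tail integral small
    have hsub : (QR R)ᶜ ⊆ (QR (n₀:ℝ))ᶜ := Set.compl_subset_compl.2
      (QR_mono (((le_max_right _ _).trans (le_max_right _ _)).trans hRR₀ :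
        (n₀:ℝ) ≤ R))
    calc (∫ ζ in (QR R)ᶜ, |Real.log ‖ζ‖| ∂μ)
        ≤ ∫ ζ in (QR (n₀:ℝ))ᶜ, |Real.log ‖ζ‖| ∂μ :=
          setIntegral_mono_set habs.integrableOn
            (Filter.Eventually.of_forall fun ζ => abs_nonneg _)
            (HasSubset.Subset.eventuallyLE hsub)
      _ < η := hn₀
  · -- exact measure
    have hMne0 : (M:ENNReal) ≠ 0 := by
      simp only [ne_eq, Nat.cast_eq_zero]; omega
    rw [← ENNReal.toReal_eq_toReal_iff' (hμfin _) (ENNReal.inv_ne_top.2 hMne0)]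
    rw [ENNReal.toReal_inv, ENNReal.toReal_natCast]
    exact hRt
  · -- a small beyond R/3
    intro z hz
    have hBR : 3*B ≤ R₀ := (le_max_left _ _).trans (le_max_right _ _)
    have : B ≤ ‖z‖ := by
      have : B ≤ R/3 := by linarith
      linarith
    exact (hB z this).le
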